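/- Let ψ : ℝ³∖{0} → ℝ be differentiable. Then ψ satisfies both 3·z·∇ψ(z) = 4·ψ(z) and z × ∇ψ(z) = 0 for all z ≠ 0 if and only if there exists a constant A ∈ ℝ such that ψ(z) = A·‖z‖^{4/3} for all z ≠ 0. -/

import Mathlib

noncomputable section
open RealInnerProductSpace

/-- Three-dimensional Euclidean space. -/
abbrev E3 := EuclideanSpace ℝ (Fin 3)

/-- The cross product on ℝ³. -/
def cross (a b : E3) : E3 :=
  (WithLp.equiv 2 (Fin 3 → ℝ)).symm
    ![a 1 * b 2 - a 2 * b 1, a 2 * b 0 - a 0 * b 2, a 0 * b 1 - a 1 * b 0]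

/-- The Euler–Poisson expression
𝓔(u, u̇, ü) = (ü × u)/‖u‖³ − 3((u̇·u)/‖u‖⁵)(u̇ × u) + (m/‖u‖³)(‖u‖² u̇ − (u̇·u) u). -/
def EP (m : ℝ) (u du ddu : E3) : E3 :=
  (‖u‖ ^ 3)⁻¹ • cross ddu u - (3 * ⟪du, u⟫ / ‖u‖ ^ 5) • cross du u
    + (m / ‖u‖ ^ 3) • (‖u‖ ^ 2 • du - ⟪du, u⟫ • u)

lemma inner_self_hasFDerivAt (z : E3) :
    HasFDerivAt (fun w : E3 => (⟪w,w⟫ : ℝ)) ((2:ℝ) • (innerSL ℝ z)) z := by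
  have h := (hasFDerivAt_id z).inner ℝ (hasFDerivAt_id z)
  refine h.congr_fderiv ?_
  ext w
  simp only [ContinuousLinearMap.smul_apply, innerSL_apply_apply, fderivInnerCLM_apply,
    ContinuousLinearMap.coe_comp', Function.comp_apply, ContinuousLinearMap.prod_apply,
    ContinuousLinearMap.coe_id', id_eq, smul_eq_mul]
  rw [real_inner_comm w z]
  ring

lemma inner_self_pos' {z : E3} (hz : z ≠ 0) : (0:ℝ) < ⟪z,z⟫ := by
  rw [real_inner_self_eq_norm_sq]
  exact pow_pos (norm_pos_iff.mpr hz) 2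

lemma rpow_inner_hasGradientAt (p : ℝ) (z : E3) (hz : z ≠ 0) :
    HasGradientAt (fun w : E3 => (⟪w,w⟫:ℝ) ^ p) ((2 * p * (⟪z,z⟫:ℝ) ^ (p-1)) • z) z := by
  have hQ : (⟪z,z⟫:ℝ) ≠ 0 := ne_of_gt (inner_self_pos' hz)
  have h := HasDerivAt.comp_hasFDerivAt (f := fun w : E3 => (⟪w,w⟫:ℝ)) z
    (Real.hasDerivAt_rpow_const (x := (⟪z,z⟫:ℝ)) (p := p) (Or.inl hQ))
    (inner_self_hasFDerivAt z)
  rw [hasGradientAt_iff_hasFDerivAt]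
  refine h.congr_fderiv ?_
  ext w
  simp [InnerProductSpace.toDual_apply_apply, real_inner_smul_left, smul_eq_mul]
  ring

lemma cross_smul_self (z : E3) (c : ℝ) : cross z (c • z) = 0 := by
  ext i
  fin_cases i <;>
    simp [cross, PiLp.toLp_apply] <;> ring

lemma cross_eq_zero_imp (z v : E3) (hz : z ≠ 0) (h : cross z v = 0) :
    ∃ c : ℝ, v = c • z := by
  have h0 : z 1 * v 2 - z 2 * v 1 = 0 := by
    have := congrFun (congrArg (WithLp.equiv 2 (Fin 3 → ℝ)) h) 0
    simpa [cross] using this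
  have h1 : z 2 * v 0 - z 0 * v 2 = 0 := by
    have := congrFun (congrArg (WithLp.equiv 2 (Fin 3 → ℝ)) h) 1
    simpa [cross] using this
  have h2 : z 0 * v 1 - z 1 * v 0 = 0 := by
    have := congrFun (congrArg (WithLp.equiv 2 (Fin 3 → ℝ)) h) 2
    simpa [cross] using this
  have hex : z 0 ≠ 0 ∨ z 1 ≠ 0 ∨ z 2 ≠ 0 := by
    by_contra hc
    push_neg at hc
    apply hz
    ext i
    fin_cases i <;> simp [hc.1, hc.2.1, hc.2.2]
  rcases hex with hi | hi | hi
  · refine ⟨v 0 / z 0, ?_⟩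
    ext i
    fin_cases i <;> simp [PiLp.smul_apply, smul_eq_mul] <;> field_simp <;> nlinarith [h0, h1, h2]
  · refine ⟨v 1 / z 1, ?_⟩
    ext i
    fin_cases i <;> simp [PiLp.smul_apply, smul_eq_mul] <;> field_simp <;> nlinarith [h0, h1, h2]
  · refine ⟨v 2 / z 2, ?_⟩
    ext i
    fin_cases i <;> simp [PiLp.smul_apply, smul_eq_mul] <;> field_simp <;> nlinarith [h0, h1, h2]

lemma const_of_fderiv_zero_on {E : Type*} [NormedAddCommGroup E] [NormedSpace ℝ E]
    {f : E → ℝ} {s : Set E} (hs : IsOpen s) (hconn : IsPreconnected s)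
    (hd : ∀ z ∈ s, DifferentiableAt ℝ f z) (h0 : ∀ z ∈ s, fderiv ℝ f z = 0)
    {x y : E} (hx : x ∈ s) (hy : y ∈ s) : f x = f y := by
  haveI : PreconnectedSpace s := Subtype.preconnectedSpace hconn
  have hlc : IsLocallyConstant (fun z : s => f z) := by
    rw [IsLocallyConstant.iff_exists_open]
    rintro ⟨z, hz⟩
    obtain ⟨ε, hε, hball⟩ := Metric.isOpen_iff.mp hs z hz
    refine ⟨Subtype.val ⁻¹' Metric.ball z ε, continuous_subtype_val.isOpen_preimage _
      Metric.isOpen_ball, Metric.mem_ball_self hε, ?_⟩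
    rintro ⟨w, hw⟩ hwball
    exact (convex_ball z ε).is_const_of_fderivWithin_eq_zero
      (f := f) (fun u hu => (hd u (hball hu)).differentiableWithinAt)
      (fun u hu => by
        rw [fderivWithin_of_isOpen Metric.isOpen_ball hu]
        exact h0 u (hball hu)) hwball (Metric.mem_ball_self hε)
  exact hlc.apply_eq_of_preconnectedSpace ⟨x, hx⟩ ⟨y, hy⟩

lemma inner_rpow_eq (z : E3) : (⟪z,z⟫:ℝ) ^ ((2:ℝ)/3) = ‖z‖ ^ ((4:ℝ)/3) := by
  rw [real_inner_self_eq_norm_sq, ← Real.rpow_natCast ‖z‖ 2, ← Real.rpow_mul (norm_nonneg z)]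
  norm_num

lemma compl_zero_preconnected : IsPreconnected ({0}ᶜ : Set E3) := by
  refine (isPathConnected_compl_singleton_of_one_lt_rank ?_ (0 : E3)).isConnected.isPreconnected
  rw [← Module.finrank_eq_rank]
  norm_num [finrank_euclideanSpace]

/-- ψ satisfies 3z·∇ψ = 4ψ and z × ∇ψ = 0 away from the origin iff
ψ(z) = A‖z‖^{4/3} for some constant A. -/
theorem psi_characterization (ψ : E3 → ℝ)
    (hψ : ∀ z : E3, z ≠ 0 → DifferentiableAt ℝ ψ z) :
    ((∀ z : E3, z ≠ 0 →
        3 * ⟪z, gradient ψ z⟫ = 4 * ψ z ∧ cross z (gradient ψ z) = 0)) ↔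
      (∃ A : ℝ, ∀ z : E3, z ≠ 0 → ψ z = A * ‖z‖ ^ ((4 : ℝ) / 3)) := by
  constructor
  · intro h
    set f : E3 → ℝ := fun z => ψ z * (⟪z,z⟫:ℝ) ^ (-((2:ℝ)/3)) with hf
    -- f has zero derivative on {0}ᶜ
    have key : ∀ z : E3, z ≠ 0 → DifferentiableAt ℝ f z ∧ fderiv ℝ f z = 0 := by
      intro z hz
      obtain ⟨h1, h2⟩ := h z hz
      have hQpos := inner_self_pos' hz
      have hQne : (⟪z,z⟫:ℝ) ≠ 0 := ne_of_gt hQpos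
      obtain ⟨c, hc⟩ := cross_eq_zero_imp z (gradient ψ z) hz h2
      have hgrad : HasGradientAt ψ (c • z) z := by
        rw [← hc]; exact (hψ z hz).hasGradientAt
      have hcval : 3 * (c * ⟪z,z⟫) = 4 * ψ z := by
        rw [← h1, hc, real_inner_smul_right]
      have hr := rpow_inner_hasGradientAt (-((2:ℝ)/3)) z hz
      have hmul := hgrad.hasFDerivAt.mul hr.hasFDerivAt
      have hco : ψ z * (2 * -((2:ℝ)/3) * (⟪z,z⟫:ℝ) ^ (-((2:ℝ)/3) - 1))
          + (⟪z,z⟫:ℝ) ^ (-((2:ℝ)/3)) * c = 0 := by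
        have hsub : (⟪z,z⟫:ℝ) ^ (-((2:ℝ)/3))
            = (⟪z,z⟫:ℝ) ^ (-((2:ℝ)/3) - 1) * ⟪z,z⟫ := by
          rw [← Real.rpow_add_one hQne]
          norm_num
        rw [hsub]
        linear_combination ((⟪z,z⟫:ℝ) ^ (-((2:ℝ)/3) - 1) / 3) * hcval
      have hzero : (ψ z • (InnerProductSpace.toDual ℝ E3)
            ((2 * -((2:ℝ)/3) * (⟪z,z⟫:ℝ) ^ (-((2:ℝ)/3) - 1)) • z)
          + ((⟪z,z⟫:ℝ) ^ (-((2:ℝ)/3))) • (InnerProductSpace.toDual ℝ E3) (c • z)) = 0 := by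
        ext w
        simp only [ContinuousLinearMap.add_apply, ContinuousLinearMap.coe_smul',
          Pi.smul_apply, InnerProductSpace.toDual_apply_apply, real_inner_smul_left,
          ContinuousLinearMap.zero_apply, smul_eq_mul]
        linear_combination (⟪z,w⟫:ℝ) * hco
      have hfd : HasFDerivAt f (0 : E3 →L[ℝ] ℝ) z := by rw [← hzero]; exact hmul
      exact ⟨hfd.differentiableAt, hfd.fderiv⟩
    set x₀ : E3 := EuclideanSpace.single (0 : Fin 3) (1:ℝ) with hx₀
    have hx₀ne : x₀ ≠ 0 := by
      intro hcon
      have := congrFun (congrArg (fun w : E3 => (w : Fin 3 → ℝ)) hcon) 0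
      simp [hx₀, EuclideanSpace.single_apply] at this
    refine ⟨f x₀, fun z hz => ?_⟩
    have hfz : f z = f x₀ :=
      const_of_fderiv_zero_on isOpen_compl_singleton compl_zero_preconnected
        (fun u hu => (key u hu).1) (fun u hu => (key u hu).2) hz hx₀ne
    have hQpos := inner_self_pos' hz
    have hQ23 : (⟪z,z⟫:ℝ) ^ (-((2:ℝ)/3)) * (⟪z,z⟫:ℝ) ^ ((2:ℝ)/3) = 1 := by
      rw [← Real.rpow_add hQpos]
      norm_num
    have : ψ z = f x₀ * (⟪z,z⟫:ℝ) ^ ((2:ℝ)/3) := by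
      rw [← hfz, hf]
      simp only
      rw [mul_assoc, hQ23, mul_one]
    rw [this, inner_rpow_eq]
  · rintro ⟨A, hA⟩ z hz
    have hQpos := inner_self_pos' hz
    have hQne : (⟪z,z⟫:ℝ) ≠ 0 := ne_of_gt hQpos
    -- ψ agrees near z with w ↦ A * ⟪w,w⟫^(2/3)
    have heq : ψ =ᶠ[nhds z] fun w : E3 => A * (⟪w,w⟫:ℝ) ^ ((2:ℝ)/3) := by
      filter_upwards [isOpen_compl_singleton.mem_nhds (by simpa using hz)] with w hw
      rw [hA w (by simpa using hw), inner_rpow_eq]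
    have hr := rpow_inner_hasGradientAt ((2:ℝ)/3) z hz
    have hAr : HasGradientAt (fun w : E3 => A * (⟪w,w⟫:ℝ) ^ ((2:ℝ)/3))
        ((A * (2 * ((2:ℝ)/3) * (⟪z,z⟫:ℝ) ^ ((2:ℝ)/3 - 1))) • z) z := by
      rw [hasGradientAt_iff_hasFDerivAt] at hr ⊢
      have h2 := hr.const_mul A
      have h3 : A • (InnerProductSpace.toDual ℝ E3)
            ((2 * ((2:ℝ)/3) * (⟪z,z⟫:ℝ) ^ ((2:ℝ)/3 - 1)) • z)
          = (InnerProductSpace.toDual ℝ E3)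
            ((A * (2 * ((2:ℝ)/3) * (⟪z,z⟫:ℝ) ^ ((2:ℝ)/3 - 1))) • z) := by
        rw [← map_smul, smul_smul]
      rwa [h3] at h2
    have hgradeq : gradient ψ z
        = (A * (2 * ((2:ℝ)/3) * (⟪z,z⟫:ℝ) ^ ((2:ℝ)/3 - 1))) • z := by
      rw [heq.gradient_eq, hAr.gradient]
    constructor
    · rw [hgradeq, real_inner_smul_right, hA z hz, ← inner_rpow_eq]
      have hstep : (⟪z,z⟫:ℝ) ^ ((2:ℝ)/3) = (⟪z,z⟫:ℝ) ^ ((2:ℝ)/3 - 1) * ⟪z,z⟫ := by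
        rw [← Real.rpow_add_one hQne]
        norm_num
      rw [hstep]
      ring
    · rw [hgradeq]
      exact cross_smul_self z _
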